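/- For every integer ℓ ≥ 2 there exist real numbers a_ℓ ≤ ℓ and c_ℓ ∈ (0, √2/π] such that the ℓ-layer neural tangent kernel function κ_NTK^ℓ satisfies κ_NTK^ℓ(−1+t) = a_ℓ − c_ℓ t^{1/2} + o(t^{1/2}) as t → 0⁺; moreover c_ℓ < √2/π whenever ℓ ≥ 3. -/

import Mathlib

open Filter Asymptotics Real Set Topology

/-- The degree-0 arc-cosine function `κ₀(u) = 1 - arccos(u)/π`. -/
noncomputable def kappa0 (u : ℝ) : ℝ := 1 - Real.arccos u / Real.pi

/-- The degree-1 arc-cosine function `κ₁(u) = (√(1-u²) + u(π - arccos u))/π`. -/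
noncomputable def kappa1 (u : ℝ) : ℝ :=
  (Real.sqrt (1 - u ^ 2) + u * (Real.pi - Real.arccos u)) / Real.pi

/-- The `ℓ`-layer neural tangent kernel function of a fully-connected ReLU network
(defined for `ℓ ≥ 2`; values below 2 are set to the 2-layer NTK):
`κ_NTK^2(u) = u κ₀(u) + κ₁(u)` and
`κ_NTK^ℓ(u) = κ_NTK^{ℓ-1}(u) · κ₀(κ₁^{∘(ℓ-2)}(u)) + κ₁^{∘(ℓ-1)}(u)` for `ℓ ≥ 3`. -/
noncomputable def kappaNTK : ℕ → ℝ → ℝ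
  | 0, u => u * kappa0 u + kappa1 u
  | 1, u => u * kappa0 u + kappa1 u
  | 2, u => u * kappa0 u + kappa1 u
  | n + 3, u => kappaNTK (n + 2) u * kappa0 (kappa1^[n + 1] u) + kappa1^[n + 2] u

lemma k1_neg_one : kappa1 (-1) = 0 := by
  simp [kappa1, Real.arccos_neg_one]

lemma k1_one : kappa1 1 = 1 := by
  simp [kappa1, Real.arccos_one, div_self Real.pi_ne_zero]

lemma k0_mem (x : ℝ) : kappa0 x ∈ Icc (0:ℝ) 1 := by
  constructor
  · have h := Real.arccos_le_pi x
    have : Real.arccos x / π ≤ 1 := by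
      rw [div_le_one Real.pi_pos]; exact h
    simp [kappa0]; linarith
  · have h := Real.arccos_nonneg x
    have : 0 ≤ Real.arccos x / π := div_nonneg h Real.pi_pos.le
    simp [kappa0]; linarith

lemma k0_pos {x : ℝ} (hx : -1 < x) : 0 < kappa0 x := by
  have h : Real.arccos x < π := by
    rcases lt_or_eq_of_le (Real.arccos_le_pi x) with h | h
    · exact h
    · exact absurd (Real.arccos_eq_pi.1 h) (not_le.2 hx)
  have : Real.arccos x / π < 1 := by rw [div_lt_one Real.pi_pos]; exact h
  simp [kappa0]; linarith

lemma k0_lt_one {x : ℝ} (hx : x < 1) : kappa0 x < 1 := by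
  have h := Real.arccos_pos.2 hx
  have : 0 < Real.arccos x / π := div_pos h Real.pi_pos
  simp [kappa0]; linarith

lemma k1_hasDerivAt {x : ℝ} (h1 : -1 < x) (h2 : x < 1) :
    HasDerivAt kappa1 (kappa0 x) x := by
  have hx1 : x ≠ -1 := ne_of_gt h1
  have hx2 : x ≠ 1 := ne_of_lt h2
  have hsq : (0:ℝ) < 1 - x ^ 2 := by nlinarith
  have hs : Real.sqrt (1 - x ^ 2) ≠ 0 := by positivity
  have hac : HasDerivAt Real.arccos (-(1 / Real.sqrt (1 - x ^ 2))) x :=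
    Real.hasDerivAt_arccos hx1 hx2
  have h1' : HasDerivAt (fun u : ℝ => Real.sqrt (1 - u ^ 2))
      (-((Real.sqrt (1 - x ^ 2))⁻¹ * 2⁻¹ * (2 * x))) x := by
    have hinner : HasDerivAt (fun u : ℝ => 1 - u ^ 2) (-(2*x)) x := by
      simpa using ((hasDerivAt_pow 2 x).const_sub 1)
    have := (Real.hasDerivAt_sqrt (ne_of_gt hsq)).comp x hinner
    simpa [Function.comp_def] using this
  have h2' : HasDerivAt (fun u : ℝ => u * (Real.pi - Real.arccos u))
      (1 * (Real.pi - Real.arccos x) + x * (1 / Real.sqrt (1 - x ^ 2))) x := by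
    have := (hasDerivAt_id x).mul (hac.const_sub Real.pi)
    simpa [Pi.mul_def] using this
  have hsum : HasDerivAt kappa1 ((-((Real.sqrt (1 - x ^ 2))⁻¹ * 2⁻¹ * (2 * x)) +
      (1 * (Real.pi - Real.arccos x) + x * (1 / Real.sqrt (1 - x ^ 2)))) / Real.pi) x :=
    (h1'.add h2').div_const Real.pi
  convert hsum using 1
  have hss : Real.sqrt (1 - x ^ 2) * Real.sqrt (1 - x ^ 2) = 1 - x ^ 2 :=
    Real.mul_self_sqrt hsq.le
  rw [kappa0]
  field_simp
  ring

lemma k1_continuous : Continuous kappa1 := by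
  unfold kappa1
  exact (((Real.continuous_sqrt.comp (by fun_prop)).add
    (continuous_id.mul (continuous_const.sub Real.continuous_arccos))).div_const _)

lemma k1_mono : StrictMonoOn kappa1 (Icc (-1:ℝ) 1) := by
  apply strictMonoOn_of_deriv_pos (convex_Icc _ _) (k1_continuous.continuousOn)
  intro x hx
  rw [interior_Icc] at hx
  rw [(k1_hasDerivAt hx.1 hx.2).deriv]
  exact k0_pos hx.1

lemma k1_nonneg {x : ℝ} (hx : x ∈ Icc (-1:ℝ) 1) : 0 ≤ kappa1 x := by
  rcases eq_or_lt_of_le hx.1 with h | h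
  · rw [← h, k1_neg_one]
  · rw [← k1_neg_one]
    exact le_of_lt (k1_mono (by simp) hx h)

lemma k1_lt_one {x : ℝ} (hx : x ∈ Icc (-1:ℝ) 1) (hx1 : x < 1) : kappa1 x < 1 := by
  rw [← k1_one]
  exact k1_mono hx (by simp) hx1

lemma k1_maps_Ico {x : ℝ} (hx : x ∈ Ico (-1:ℝ) 1) : kappa1 x ∈ Ico (0:ℝ) 1 :=
  ⟨k1_nonneg ⟨hx.1, hx.2.le⟩, k1_lt_one ⟨hx.1, hx.2.le⟩ hx.2⟩

lemma k1_lipschitz : LipschitzOnWith 1 kappa1 (Ioo (-1:ℝ) 1) := by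
  apply Convex.lipschitzOnWith_of_nnnorm_hasDerivWithin_le (f' := kappa0) (convex_Ioo _ _)
  · intro x hx
    exact (k1_hasDerivAt hx.1 hx.2).hasDerivWithinAt
  · intro x hx
    have h := k0_mem x
    rw [← NNReal.coe_le_coe]
    push_cast
    rw [Real.norm_eq_abs, abs_of_nonneg h.1]
    exact h.2

lemma k1_lip {x y : ℝ} (hx : x ∈ Ioo (-1:ℝ) 1) (hy : y ∈ Ioo (-1:ℝ) 1) :
    |kappa1 x - kappa1 y| ≤ |x - y| := by
  have := k1_lipschitz.dist_le_mul x hx y hy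
  simpa [Real.dist_eq] using this

lemma Ico_subset_Ioo' : Ico (0:ℝ) 1 ⊆ Ioo (-1:ℝ) 1 := fun x hx => ⟨by linarith [hx.1], hx.2⟩

lemma iter_mem (n : ℕ) {x : ℝ} (hx : x ∈ Ico (0:ℝ) 1) : kappa1^[n] x ∈ Ico (0:ℝ) 1 := by
  induction n generalizing x with
  | zero => simpa using hx
  | succ n ih =>
    rw [Function.iterate_succ_apply]
    exact ih (k1_maps_Ico ⟨by linarith [hx.1], hx.2⟩)

lemma iter_lip (n : ℕ) {x y : ℝ} (hx : x ∈ Ico (0:ℝ) 1) (hy : y ∈ Ico (0:ℝ) 1) :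
    |kappa1^[n] x - kappa1^[n] y| ≤ |x - y| := by
  induction n generalizing x y with
  | zero => simp
  | succ n ih =>
    rw [Function.iterate_succ_apply, Function.iterate_succ_apply]
    calc |kappa1^[n] (kappa1 x) - kappa1^[n] (kappa1 y)| ≤ |kappa1 x - kappa1 y| :=
          ih (k1_maps_Ico ⟨by linarith [hx.1], hx.2⟩) (k1_maps_Ico ⟨by linarith [hy.1], hy.2⟩)
      _ ≤ |x - y| := k1_lip (Ico_subset_Ioo' hx) (Ico_subset_Ioo' hy)

-- x / sin x → 1 at 𝓝[≠]0
lemma tendsto_div_sin : Tendsto (fun x : ℝ => x / Real.sin x) (𝓝[≠] 0) (𝓝 1) := by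
  have h : Tendsto (slope Real.sin 0) (𝓝[≠] 0) (𝓝 1) := by
    have := (Real.hasDerivAt_sin 0)
    rw [Real.cos_zero] at this
    exact hasDerivAt_iff_tendsto_slope.1 this
  have h2 : Tendsto (fun x : ℝ => Real.sin x / x) (𝓝[≠] 0) (𝓝 1) := by
    apply h.congr'
    filter_upwards [self_mem_nhdsWithin] with x hx
    rw [slope_def_field]
    simp
  have := h2.inv₀ (by norm_num)
  simpa using this

-- arccos(1-t)/√t → √2
lemma tendsto_arccos_one_sub : Tendsto (fun t : ℝ => Real.arccos (1 - t) / Real.sqrt t)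
    (𝓝[>] (0:ℝ)) (𝓝 (Real.sqrt 2)) := by
  set y : ℝ → ℝ := fun t => Real.arccos (1 - t) with hy
  have hy0 : Tendsto y (𝓝[>] (0:ℝ)) (𝓝[≠] (0:ℝ)) := by
    rw [tendsto_nhdsWithin_iff]
    constructor
    · have : Tendsto y (𝓝 0) (𝓝 (Real.arccos 1)) :=
        (Real.continuous_arccos.comp (continuous_const.sub continuous_id)).tendsto' 0 _ (by simp)
      rw [Real.arccos_one] at this
      exact this.mono_left nhdsWithin_le_nhds
    · filter_upwards [self_mem_nhdsWithin] with t ht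
      exact ne_of_gt (Real.arccos_pos.2 (by simpa using (mem_Ioi.1 ht)))
  have h1 : Tendsto (fun t => y t / Real.sin (y t)) (𝓝[>] (0:ℝ)) (𝓝 1) :=
    tendsto_div_sin.comp hy0
  have h2 : Tendsto (fun t : ℝ => Real.sqrt (2 - t)) (𝓝[>] (0:ℝ)) (𝓝 (Real.sqrt 2)) := by
    have : Tendsto (fun t : ℝ => Real.sqrt (2 - t)) (𝓝 0) (𝓝 (Real.sqrt 2)) :=
      (Real.continuous_sqrt.comp (continuous_const.sub continuous_id)).tendsto' 0 _ (by norm_num)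
    exact this.mono_left nhdsWithin_le_nhds
  have h3 := h1.mul h2
  rw [one_mul] at h3
  apply h3.congr'
  filter_upwards [Ioo_mem_nhdsGT_of_mem (show (0:ℝ) ∈ Ico (0:ℝ) 1 by simp)] with t ht
  have ht0 : 0 < t := ht.1
  have ht1 : t < 1 := ht.2
  have hsin : Real.sin (y t) = Real.sqrt t * Real.sqrt (2 - t) := by
    rw [hy]
    simp only
    rw [Real.sin_arccos]
    rw [show 1 - (1 - t) ^ 2 = t * (2 - t) by ring, Real.sqrt_mul ht0.le]
  have hst : Real.sqrt t ≠ 0 := by positivity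
  have hs2t : Real.sqrt (2 - t) ≠ 0 := by
    have : (0:ℝ) < 2 - t := by linarith
    positivity
  rw [hsin]
  field_simp
  ring

-- kappa0 (-1+t)/√t → √2/π
lemma tendsto_k0 : Tendsto (fun t : ℝ => kappa0 (-1 + t) / Real.sqrt t)
    (𝓝[>] (0:ℝ)) (𝓝 (Real.sqrt 2 / Real.pi)) := by
  have h := tendsto_arccos_one_sub.div_const Real.pi
  apply h.congr
  intro t
  have : Real.arccos (-1 + t) = π - Real.arccos (1 - t) := by
    rw [show (-1 + t : ℝ) = -(1 - t) by ring, Real.arccos_neg]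
  rw [kappa0, this]
  field_simp
  ring

-- kappa1 (-1+t)/√t → 0
lemma tendsto_k1 : Tendsto (fun t : ℝ => kappa1 (-1 + t) / Real.sqrt t)
    (𝓝[>] (0:ℝ)) (𝓝 0) := by
  have h2 : Tendsto (fun t : ℝ => Real.sqrt (2 - t)) (𝓝[>] (0:ℝ)) (𝓝 (Real.sqrt 2)) := by
    have : Tendsto (fun t : ℝ => Real.sqrt (2 - t)) (𝓝 0) (𝓝 (Real.sqrt 2)) :=
      (Real.continuous_sqrt.comp (continuous_const.sub continuous_id)).tendsto' 0 _ (by norm_num)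
    exact this.mono_left nhdsWithin_le_nhds
  have hid : Tendsto (fun t : ℝ => -1 + t) (𝓝[>] (0:ℝ)) (𝓝 (-1)) := by
    have : Tendsto (fun t : ℝ => -1 + t) (𝓝 0) (𝓝 (-1)) := by
      have := (continuous_const.add continuous_id (f := fun t : ℝ => (-1:ℝ))).tendsto (0:ℝ)
      simpa [Pi.add_def] using this
    exact this.mono_left nhdsWithin_le_nhds
  have h3 := (h2.add (hid.mul tendsto_arccos_one_sub)).div_const Real.pi
  have hlim : (Real.sqrt 2 + (-1) * Real.sqrt 2) / π = 0 := by simp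
  rw [hlim] at h3
  apply h3.congr'
  filter_upwards [Ioo_mem_nhdsGT_of_mem (show (0:ℝ) ∈ Ico (0:ℝ) 1 by simp)] with t ht
  have ht0 : 0 < t := ht.1
  have hst : Real.sqrt t ≠ 0 := by positivity
  have hacs : Real.pi - Real.arccos (-1 + t) = Real.arccos (1 - t) := by
    rw [show (-1 + t : ℝ) = -(1 - t) by ring, Real.arccos_neg]; ring
  have hsq : Real.sqrt (1 - (-1 + t) ^ 2) = Real.sqrt t * Real.sqrt (2 - t) := by
    rw [show 1 - (-1 + t) ^ 2 = t * (2 - t) by ring, Real.sqrt_mul ht0.le]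
  rw [kappa1, hacs, hsq]
  field_simp

lemma k1_shift_mem {t : ℝ} (ht : t ∈ Ioo (0:ℝ) 1) : kappa1 (-1 + t) ∈ Ico (0:ℝ) 1 :=
  k1_maps_Ico ⟨by linarith [ht.1], by linarith [ht.2]⟩

-- (κ₁^[m+1](-1+t) - κ₁^[m] 0)/√t → 0
lemma tendsto_iter (m : ℕ) :
    Tendsto (fun t : ℝ => (kappa1^[m+1] (-1 + t) - kappa1^[m] 0) / Real.sqrt t)
      (𝓝[>] (0:ℝ)) (𝓝 0) := by
  apply squeeze_zero_norm' (a := fun t => |kappa1 (-1+t) / Real.sqrt t|)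
  · filter_upwards [Ioo_mem_nhdsGT_of_mem (show (0:ℝ) ∈ Ico (0:ℝ) 1 by simp)] with t ht
    have h0 : (0:ℝ) ∈ Ico (0:ℝ) 1 := by simp
    have hb := iter_lip m (k1_shift_mem ht) h0
    simp only [sub_zero] at hb
    have hst : (0:ℝ) < |Real.sqrt t| := by
      rw [abs_of_nonneg (Real.sqrt_nonneg t)]
      exact Real.sqrt_pos.2 ht.1
    rw [Real.norm_eq_abs, abs_div, abs_div]
    rw [div_le_div_iff_of_pos_right hst]
    simpa [Function.iterate_succ_apply] using hb
  · simpa using tendsto_k1.abs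

-- (κ₀(s t) - κ₀ q)/√t → 0 given (s - q)/√t → 0, q ∈ Ico 0 1
lemma tendsto_k0_comp {s : ℝ → ℝ} {q : ℝ} (hq : q ∈ Ico (0:ℝ) 1)
    (hs : Tendsto (fun t => (s t - q) / Real.sqrt t) (𝓝[>] (0:ℝ)) (𝓝 0))
    (hsq : Tendsto s (𝓝[>] (0:ℝ)) (𝓝 q)) :
    Tendsto (fun t => (kappa0 (s t) - kappa0 q) / Real.sqrt t) (𝓝[>] (0:ℝ)) (𝓝 0) := by
  have hq1 : q ≠ -1 := by intro h; rw [h] at hq; linarith [hq.1]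
  have hq2 : q ≠ 1 := ne_of_lt hq.2
  have hder : HasDerivAt kappa0 (1 / (π * Real.sqrt (1 - q ^ 2))) q := by
    have : HasDerivAt kappa0 (-(-(1 / Real.sqrt (1 - q ^ 2)) / Real.pi)) q :=
      (Real.hasDerivAt_arccos hq1 hq2).div_const Real.pi |>.const_sub 1
    convert this using 1
    ring
  have hBO : (fun x => kappa0 x - kappa0 q) =O[𝓝 q] (fun x => x - q) :=
    hder.isBigO_sub
  obtain ⟨C, hC⟩ := hBO.bound
  apply squeeze_zero_norm' (a := fun t => C * |(s t - q) / Real.sqrt t|)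
  · filter_upwards [hsq.eventually hC] with t ht
    have ht' : |kappa0 (s t) - kappa0 q| ≤ C * |s t - q| := by
      simpa [Real.norm_eq_abs] using ht
    have hCnn : 0 ≤ C * |s t - q| := le_trans (abs_nonneg _) ht'
    rw [Real.norm_eq_abs, abs_div, abs_div, ← mul_div_assoc]
    rcases eq_or_lt_of_le (abs_nonneg (Real.sqrt t)) with h | h
    · rw [← h]; simp
    rw [div_le_div_iff_of_pos_right h]
    exact ht'
  · have := hs.abs.const_mul C
    simpa using this

lemma tendsto_sqrt0 : Tendsto (fun t : ℝ => Real.sqrt t) (𝓝[>] (0:ℝ)) (𝓝 0) :=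
  (Real.continuous_sqrt.tendsto' 0 0 (by simp)).mono_left nhdsWithin_le_nhds

lemma tendsto_of_div_sqrt {f : ℝ → ℝ} {L M : ℝ}
    (h : Tendsto (fun t => (f t - L) / Real.sqrt t) (𝓝[>] (0:ℝ)) (𝓝 M)) :
    Tendsto f (𝓝[>] (0:ℝ)) (𝓝 L) := by
  have h2 := h.mul tendsto_sqrt0
  rw [mul_zero] at h2
  have h3 : Tendsto (fun t => f t - L) (𝓝[>] (0:ℝ)) (𝓝 0) := by
    apply h2.congr'
    filter_upwards [self_mem_nhdsWithin] with t ht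
    have : Real.sqrt t ≠ 0 := ne_of_gt (Real.sqrt_pos.2 (mem_Ioi.1 ht))
    field_simp
  have := h3.add_const L
  simpa using this

lemma main_lemma (n : ℕ) : ∃ a c : ℝ, 0 ≤ a ∧ a ≤ (n:ℝ) ∧ 0 < c ∧ c ≤ Real.sqrt 2 / Real.pi ∧
    (1 ≤ n → c < Real.sqrt 2 / Real.pi) ∧
    Tendsto (fun t : ℝ => (kappaNTK (n+2) (-1+t) - a + c * Real.sqrt t) / Real.sqrt t)
      (𝓝[>] (0:ℝ)) (𝓝 0) := by
  induction n with
  | zero =>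
    refine ⟨0, Real.sqrt 2 / Real.pi, le_refl _, by simp, by positivity, le_refl _, by omega, ?_⟩
    have hid : Tendsto (fun t : ℝ => -1 + t) (𝓝[>] (0:ℝ)) (𝓝 (-1)) := by
      have : Tendsto (fun t : ℝ => -1 + t) (𝓝 (0:ℝ)) (𝓝 (-1)) :=
        Continuous.tendsto' (by fun_prop) 0 (-1) (by norm_num)
      exact this.mono_left nhdsWithin_le_nhds
    have h := (hid.mul tendsto_k0).add tendsto_k1 |>.add_const (Real.sqrt 2 / Real.pi)
    have hlim : -1 * (Real.sqrt 2 / π) + 0 + Real.sqrt 2 / π = 0 := by ring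
    rw [hlim] at h
    apply h.congr'
    filter_upwards [self_mem_nhdsWithin] with t ht
    have hst : Real.sqrt t ≠ 0 := ne_of_gt (Real.sqrt_pos.2 (mem_Ioi.1 ht))
    show (-1 + t) * (kappa0 (-1 + t) / Real.sqrt t) + kappa1 (-1 + t) / Real.sqrt t
        + Real.sqrt 2 / π
      = (kappaNTK 2 (-1+t) - 0 + Real.sqrt 2 / π * Real.sqrt t) / Real.sqrt t
    show _ = ((-1 + t) * kappa0 (-1 + t) + kappa1 (-1 + t) - 0
        + Real.sqrt 2 / π * Real.sqrt t) / Real.sqrt t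
    rw [sub_zero, add_div, add_div, mul_div_assoc, mul_div_assoc, div_self hst, mul_one]
  | succ n ih =>
    obtain ⟨a, c, ha0, han, hc0, hcle, hcstrict, hT⟩ := ih
    set q : ℝ := kappa1^[n] 0 with hqdef
    set q' : ℝ := kappa1^[n+1] 0 with hq'def
    have h0mem : (0:ℝ) ∈ Ico (0:ℝ) 1 := by simp
    have hqm : q ∈ Ico (0:ℝ) 1 := iter_mem n h0mem
    have hq'm : q' ∈ Ico (0:ℝ) 1 := iter_mem (n+1) h0mem
    have hk0q_pos : 0 < kappa0 q := k0_pos (by linarith [hqm.1])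
    have hk0q_lt : kappa0 q < 1 := k0_lt_one hqm.2
    refine ⟨a * kappa0 q + q', c * kappa0 q, ?_, ?_, ?_, ?_, ?_, ?_⟩
    · have := mul_nonneg ha0 hk0q_pos.le
      linarith [hq'm.1]
    · have h1 : a * kappa0 q ≤ a := mul_le_of_le_one_right ha0 hk0q_lt.le
      have : (n:ℝ) + 1 = ((n+1 : ℕ) : ℝ) := by push_cast; ring
      push_cast
      linarith [hq'm.2]
    · exact mul_pos hc0 hk0q_pos
    · have : c * kappa0 q < c := by
        nlinarith
      linarith
    · intro _
      have : c * kappa0 q < c := by nlinarith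
      linarith
    · -- the asymptotic part
      set s : ℝ → ℝ := fun t => kappa1^[n+1] (-1 + t) with hsdef
      set F : ℝ → ℝ := fun t => kappaNTK (n+2) (-1+t) with hFdef
      set G : ℝ → ℝ := fun t => kappa0 (s t) with hGdef
      set W : ℝ → ℝ := fun t => kappa1^[n+2] (-1+t) with hWdef
      have hG1 : Tendsto (fun t => (s t - q) / Real.sqrt t) (𝓝[>] (0:ℝ)) (𝓝 0) :=
        tendsto_iter n
      have hsq : Tendsto s (𝓝[>] (0:ℝ)) (𝓝 q) := tendsto_of_div_sqrt hG1
      have hG2 : Tendsto (fun t => (G t - kappa0 q) / Real.sqrt t) (𝓝[>] (0:ℝ)) (𝓝 0) :=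
        tendsto_k0_comp hqm hG1 hsq
      have hGq : Tendsto G (𝓝[>] (0:ℝ)) (𝓝 (kappa0 q)) := tendsto_of_div_sqrt hG2
      have hW : Tendsto (fun t => (W t - q') / Real.sqrt t) (𝓝[>] (0:ℝ)) (𝓝 0) :=
        tendsto_iter (n+1)
      have h1 := hGq.mul hT
      have h2 := hG2.const_mul a
      have h3 := ((tendsto_const_nhds (x := kappa0 q)).sub hGq).const_mul c
      have hsum := ((h1.add h2).add h3).add hW
      simp only [mul_zero, add_zero, sub_self, mul_zero] at hsum
      apply hsum.congr'
      filter_upwards [self_mem_nhdsWithin] with t ht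
      have hst : Real.sqrt t ≠ 0 := ne_of_gt (Real.sqrt_pos.2 (mem_Ioi.1 ht))
      have hNTK : kappaNTK (n+3) (-1+t) = F t * G t + W t := rfl
      show G t * ((F t - a + c * Real.sqrt t) / Real.sqrt t)
          + a * ((G t - kappa0 q) / Real.sqrt t)
          + c * (kappa0 q - G t) + (W t - q') / Real.sqrt t
        = (kappaNTK (n+3) (-1+t) - (a * kappa0 q + q') + c * kappa0 q * Real.sqrt t)
            / Real.sqrt t
      rw [hNTK]
      field_simp
      ring

/-- Expansion around `-1` of the `ℓ`-layer NTK function. -/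
theorem deep_ntk_expansion_minus_one (ℓ : ℕ) (hℓ : 2 ≤ ℓ) :
    ∃ a c : ℝ, a ≤ (ℓ : ℝ) ∧ 0 < c ∧ c ≤ Real.sqrt 2 / Real.pi ∧
      (3 ≤ ℓ → c < Real.sqrt 2 / Real.pi) ∧
      (fun t : ℝ => kappaNTK ℓ (-1 + t) - (a - c * t ^ ((1 : ℝ) / 2)))
        =o[𝓝[>] (0 : ℝ)] fun t => t ^ ((1 : ℝ) / 2) := by
  obtain ⟨n, rfl⟩ : ∃ n, ℓ = n + 2 := ⟨ℓ - 2, by omega⟩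
  obtain ⟨a, c, ha0, han, hc0, hcle, hcstrict, hT⟩ := main_lemma n
  refine ⟨a, c, ?_, hc0, hcle, fun h => hcstrict (by omega), ?_⟩
  · push_cast
    linarith
  · rw [isLittleO_iff_tendsto']
    · apply hT.congr'
      filter_upwards [self_mem_nhdsWithin] with t ht
      rw [← Real.sqrt_eq_rpow]
      ring
    · filter_upwards [self_mem_nhdsWithin] with t ht h
      exfalso
      have : (0:ℝ) < t ^ ((1:ℝ)/2) := Real.rpow_pos_of_pos (mem_Ioi.1 ht) _
      rw [h] at this
      exact lt_irrefl 0 this
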